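/- Assume the (A3) setting. There exist constants 0 < c ≤ C, depending only on d, α, β₁, β₂, β₃, β₄ and C₂, such that for every r₀ ∈ (0, 1/4], every z₀ ∈ ∂ℝ^d_+ with |z₀| = 4, every z ∈ U(r₀) and every y ∈ ℝ^d_+ ∩ B(z₀, 1/4), one has c · E(z,y) ≤ J(z,y) ≤ C · E(z,y), where E(z,y) = (z_d ∧ y_d)^{β₁} (z_d ∨ y_d)^{β₂} (log(1 + (z_d ∨ y_d)/(z_d ∧ y_d)))^{β₃} (log(1/(z_d ∨ y_d)))^{β₄}. -/

import Mathlib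

open MeasureTheory Real

noncomputable section

/-- Points of `ℝ^d`, written as pairs `(x̃, x_d) ∈ ℝ^{d-1} × ℝ` (here `m = d - 1`). -/
abbrev Pt (m : ℕ) := EuclideanSpace ℝ (Fin m) × ℝ

/-- The Euclidean norm on `Pt m`. -/
noncomputable def nrm {m : ℕ} (x : Pt m) : ℝ := Real.sqrt (‖x.1‖ ^ 2 + x.2 ^ 2)

lemma nrm_nonneg {m : ℕ} (x : Pt m) : 0 ≤ nrm x := Real.sqrt_nonneg _

lemma abs_snd_le_nrm {m : ℕ} (x : Pt m) : |x.2| ≤ nrm x := by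
  rw [← Real.sqrt_sq_eq_abs]
  exact Real.sqrt_le_sqrt (by nlinarith [sq_nonneg ‖x.1‖])

lemma nrm_neg {m : ℕ} (x : Pt m) : nrm (-x) = nrm x := by
  simp [nrm]

lemma sqrt2_minkowski (p q r s : ℝ) (hp : 0 ≤ p) (hq : 0 ≤ q) :
    Real.sqrt ((p + q) ^ 2 + (r + s) ^ 2) ≤
      Real.sqrt (p ^ 2 + r ^ 2) + Real.sqrt (q ^ 2 + s ^ 2) := by
  set A := Real.sqrt (p ^ 2 + r ^ 2) with hA
  set Bq := Real.sqrt (q ^ 2 + s ^ 2) with hB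
  have hA0 : 0 ≤ A := Real.sqrt_nonneg _
  have hB0 : 0 ≤ Bq := Real.sqrt_nonneg _
  have hA2 : A ^ 2 = p ^ 2 + r ^ 2 := Real.sq_sqrt (by positivity)
  have hB2 : Bq ^ 2 = q ^ 2 + s ^ 2 := Real.sq_sqrt (by positivity)
  have key : p * q + r * s ≤ A * Bq := by
    nlinarith [sq_nonneg (p * s - q * r), sq_nonneg (A * Bq), mul_nonneg hA0 hB0,
      sq_nonneg (p * q + r * s - A * Bq), sq_nonneg (p*q + r*s)]
  calc Real.sqrt ((p + q) ^ 2 + (r + s) ^ 2) ≤ Real.sqrt ((A + Bq) ^ 2) := by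
        apply Real.sqrt_le_sqrt; nlinarith
    _ = A + Bq := Real.sqrt_sq (by positivity)

lemma nrm_add_le {m : ℕ} (a b : Pt m) : nrm (a + b) ≤ nrm a + nrm b := by
  have h1 : ‖(a + b).1‖ ≤ ‖a.1‖ + ‖b.1‖ := norm_add_le _ _
  have h2 : |(a + b).2| ≤ |a.2| + |b.2| := abs_add_le _ _
  have step1 : nrm (a + b) ≤ Real.sqrt ((‖a.1‖ + ‖b.1‖) ^ 2 + (|a.2| + |b.2|) ^ 2) := by
    apply Real.sqrt_le_sqrt
    have := abs_nonneg (a + b).2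
    have := norm_nonneg (a + b).1
    nlinarith [sq_abs (a + b).2, abs_nonneg a.2, abs_nonneg b.2]
  refine step1.trans ?_
  have := sqrt2_minkowski ‖a.1‖ ‖b.1‖ |a.2| |b.2| (norm_nonneg _) (norm_nonneg _)
  simpa [nrm, sq_abs] using this

/-- The box `D_0̃(a,b) = {y = (ỹ, y_d) : |ỹ| < a, 0 < y_d < b}`. -/
def Dbox {m : ℕ} (a b : ℝ) : Set (Pt m) :=
  {y | ‖y.1‖ < a ∧ 0 < y.2 ∧ y.2 < b}

/-- The function `B̃(x,y)` of assumption (A3). -/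
noncomputable def Btilde {m : ℕ} (β₁ β₂ β₃ β₄ : ℝ) (x y : Pt m) : ℝ :=
  (min (min x.2 y.2 / nrm (x - y)) 1) ^ β₁ * (min (max x.2 y.2 / nrm (x - y)) 1) ^ β₂ *
    (Real.log (1 + min (max x.2 y.2) (nrm (x - y)) / min (min x.2 y.2) (nrm (x - y)))) ^ β₃ *
    (Real.log (1 + nrm (x - y) / min (max x.2 y.2) (nrm (x - y)))) ^ β₄

/-- The function `k(y)` of Lemma 7.1. -/
noncomputable def kfun {m : ℕ} (d : ℕ) (α β₁ β₂ β₃ β₄ : ℝ) (y : Pt m) : ℝ :=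
  (min y.2 1) ^ β₁ * (max y.2 1) ^ β₂ * nrm y ^ (-(d : ℝ) - α - β₁ - β₂) *
    (1 + |Real.log y.2|) ^ β₃ * (Real.log (1 + nrm y / max y.2 1)) ^ β₄
set_option maxHeartbeats 1000000 in
theorem stmt_19 (d : ℕ) (hd : 2 ≤ d) (α β₁ β₂ β₃ β₄ C₂ : ℝ)
    (hα0 : 0 < α) (hα2 : α < 2)
    (hβ₁ : 0 ≤ β₁) (hβ₂ : 0 ≤ β₂) (hβ₃ : 0 ≤ β₃) (hβ₄ : 0 ≤ β₄)
    (h13 : 0 < β₃ → 0 < β₁) (h24 : 0 < β₄ → 0 < β₂) (hC₂ : 1 ≤ C₂)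
    (B : Pt (d - 1) → Pt (d - 1) → ℝ)
    (hB0 : ∀ x y, 0 ≤ B x y)
    (hBl : ∀ x y : Pt (d - 1), 0 < x.2 → 0 < y.2 →
      C₂⁻¹ * Btilde β₁ β₂ β₃ β₄ x y ≤ B x y)
    (hBu : ∀ x y : Pt (d - 1), 0 < x.2 → 0 < y.2 →
      B x y ≤ C₂ * Btilde β₁ β₂ β₃ β₄ x y) :
    ∃ c C : ℝ, 0 < c ∧ c ≤ C ∧
      ∀ r₀ : ℝ, 0 < r₀ → r₀ ≤ 1 / 4 →
      ∀ z₀ : Pt (d - 1), z₀.2 = 0 → nrm z₀ = 4 →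
      ∀ z y : Pt (d - 1),
        z ∈ (Dbox (r₀ / 2) (r₀ / 2) : Set (Pt (d - 1))) →
        0 < y.2 → nrm (y - z₀) < 1 / 4 →
        (c * ((min z.2 y.2) ^ β₁ * (max z.2 y.2) ^ β₂ *
              (Real.log (1 + max z.2 y.2 / min z.2 y.2)) ^ β₃ *
              (Real.log (1 / max z.2 y.2)) ^ β₄)
            ≤ nrm (z - y) ^ (-(d : ℝ) - α) * B z y) ∧
        (nrm (z - y) ^ (-(d : ℝ) - α) * B z y
            ≤ C * ((min z.2 y.2) ^ β₁ * (max z.2 y.2) ^ β₂ *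
                (Real.log (1 + max z.2 y.2 / min z.2 y.2)) ^ β₃ *
                (Real.log (1 / max z.2 y.2)) ^ β₄)) := by
  set ea : ℝ := -(d : ℝ) - α - β₁ - β₂ with hea
  have hea0 : ea ≤ 0 := by
    have : (2:ℝ) ≤ (d:ℝ) := by exact_mod_cast hd
    simp only [hea]; linarith
  refine ⟨C₂⁻¹ * (5:ℝ) ^ ea, C₂ * 3 ^ β₄ * (3:ℝ) ^ ea, by positivity, ?_, ?_⟩
  · have h53 : (5:ℝ) ^ ea ≤ (3:ℝ) ^ ea :=
      Real.rpow_le_rpow_of_nonpos (by norm_num) (by norm_num) hea0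
    have h3b : (1:ℝ) ≤ (3:ℝ) ^ β₄ := Real.one_le_rpow (by norm_num) hβ₄
    have hC₂' : C₂⁻¹ ≤ C₂ := le_trans (inv_le_one_of_one_le₀ hC₂) hC₂
    have h3pos : (0:ℝ) < (3:ℝ) ^ ea := by positivity
    have h5pos : (0:ℝ) < (5:ℝ) ^ ea := by positivity
    calc C₂⁻¹ * (5:ℝ) ^ ea ≤ C₂ * (3:ℝ) ^ ea := by
          apply mul_le_mul hC₂' h53 h5pos.le (by linarith)
      _ ≤ C₂ * 3 ^ β₄ * (3:ℝ) ^ ea := by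
          apply mul_le_mul_of_nonneg_right ?_ h3pos.le
          nlinarith
  intro r₀ hr₀ hr₀4 z₀ hz₀2 hz₀n z y hz hy2 hyz₀
  obtain ⟨hz1, hz2pos, hz2lt⟩ := hz
  -- basic bounds
  set m := min z.2 y.2 with hm
  set M := max z.2 y.2 with hM
  set N := nrm (z - y) with hN
  have hy2lt : y.2 < 1/4 := by
    have h1 : |y.2| ≤ nrm (y - z₀) := by
      have := abs_snd_le_nrm (y - z₀)
      simpa [hz₀2] using this
    calc y.2 ≤ |y.2| := le_abs_self _
      _ ≤ nrm (y - z₀) := h1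
      _ < 1/4 := hyz₀
  have hz2lt' : z.2 < 1/8 := by linarith
  have hm0 : 0 < m := lt_min hz2pos hy2
  have hmM : m ≤ M := min_le_max
  have hM0 : 0 < M := lt_of_lt_of_le hm0 hmM
  have hMlt : M < 1/4 := max_lt (by linarith) hy2lt
  -- bound on nrm z
  have hnz : nrm z < 1/4 := by
    have h1 : ‖z.1‖ < 1/8 := by linarith
    have : nrm z < 1/4 ↔ ‖z.1‖ ^ 2 + z.2 ^ 2 < (1/4)^2 := Real.sqrt_lt' (by norm_num)
    rw [this]
    nlinarith [norm_nonneg z.1]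
  -- bounds on N
  have hNlb : (3.5:ℝ) ≤ N := by
    have hid : z₀ = -(z - y) + (z + -(y - z₀)) := by abel
    have : nrm z₀ ≤ nrm (z - y) + nrm (z + -(y - z₀)) := by
      calc nrm z₀ = nrm (-(z - y) + (z + -(y - z₀))) := by rw [← hid]
        _ ≤ nrm (-(z - y)) + nrm (z + -(y - z₀)) := nrm_add_le _ _
        _ = nrm (z - y) + nrm (z + -(y - z₀)) := by rw [nrm_neg]
    have h2 : nrm (z + -(y - z₀)) ≤ nrm z + nrm (y - z₀) := by
      calc nrm (z + -(y - z₀)) ≤ nrm z + nrm (-(y - z₀)) := nrm_add_le _ _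
        _ = nrm z + nrm (y - z₀) := by rw [nrm_neg]
    rw [hz₀n] at this
    linarith
  have hNub : N ≤ (4.5:ℝ) := by
    have hid : z - y = (z + -(y - z₀)) + -z₀ := by abel
    calc N = nrm ((z + -(y - z₀)) + -z₀) := by rw [hN, hid]
      _ ≤ nrm (z + -(y - z₀)) + nrm (-z₀) := nrm_add_le _ _
      _ ≤ nrm z + nrm (-(y - z₀)) + nrm (-z₀) := by linarith [nrm_add_le z (-(y - z₀))]
      _ = nrm z + nrm (y - z₀) + nrm z₀ := by rw [nrm_neg, nrm_neg]
      _ ≤ 4.5 := by rw [hz₀n]; linarith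
  have hN0 : (0:ℝ) < N := by linarith
  -- simplify Btilde
  have hmN : min m N = m := min_eq_left (by linarith)
  have hMN : min M N = M := min_eq_left (by linarith)
  have hmdiv : min (m / N) 1 = m / N := min_eq_left (by
    rw [div_le_one hN0]; linarith)
  have hMdiv : min (M / N) 1 = M / N := min_eq_left (by
    rw [div_le_one hN0]; linarith)
  set Lm := Real.log (1 + M / m) with hLm
  set LN := Real.log (1 + N / M) with hLN
  set L₀ := Real.log (1 / M) with hL₀
  have hBt : Btilde β₁ β₂ β₃ β₄ z y
      = (m / N) ^ β₁ * (M / N) ^ β₂ * Lm ^ β₃ * LN ^ β₄ := by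
    rw [Btilde, ← hm, ← hM, ← hN, hmN, hMN, hmdiv, hMdiv]
  -- log bounds
  have hL₀pos : 0 < L₀ := Real.log_pos (by rw [lt_div_iff₀ hM0]; linarith)
  have hLmpos : 0 ≤ Lm := Real.log_nonneg (by
    have : 0 ≤ M / m := by positivity
    linarith)
  have hLNl : L₀ ≤ LN := by
    apply Real.log_le_log (by positivity)
    have h1 : 1 / M ≤ N / M := by gcongr; linarith
    have h2 : 0 < N / M := by positivity
    linarith
  have hLNu : LN ≤ 3 * L₀ := by
    have h1 : 1 + N / M ≤ (1 / M) ^ (3:ℕ) := by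
      rw [div_pow, one_pow, le_div_iff₀ (by positivity)]
      have he : (1 + N / M) * M ^ 3 = M ^ 3 + N * M ^ 2 := by
        field_simp
      rw [he]
      nlinarith [sq_nonneg M, pow_pos hM0 2, pow_pos hM0 3]
    calc LN ≤ Real.log ((1 / M) ^ (3:ℕ)) := Real.log_le_log (by positivity) h1
      _ = 3 * L₀ := by rw [Real.log_pow, hL₀, one_div, Real.log_inv]; push_cast; ring
  have hLN0 : 0 ≤ LN := le_trans hL₀pos.le hLNl
  -- key algebraic identity
  have e3 : N ^ ea = N ^ (-(d:ℝ) - α) * (N ^ β₁)⁻¹ * (N ^ β₂)⁻¹ := by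
    rw [hea, show -(d:ℝ) - α - β₁ - β₂ = (-(d:ℝ) - α) + -β₁ + -β₂ by ring,
      Real.rpow_add hN0, Real.rpow_add hN0, Real.rpow_neg hN0.le, Real.rpow_neg hN0.le]
  have key : N ^ (-(d:ℝ) - α) * Btilde β₁ β₂ β₃ β₄ z y
      = m ^ β₁ * M ^ β₂ * Lm ^ β₃ * LN ^ β₄ * N ^ ea := by
    rw [hBt, Real.div_rpow hm0.le hN0.le, Real.div_rpow hM0.le hN0.le, e3]
    simp only [div_eq_mul_inv]
    ring
  have hNea_l : (5:ℝ) ^ ea ≤ N ^ ea :=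
    Real.rpow_le_rpow_of_nonpos hN0 (by linarith) hea0
  have hNea_u : N ^ ea ≤ (3:ℝ) ^ ea :=
    Real.rpow_le_rpow_of_nonpos (by norm_num) (by linarith) hea0
  have hLNrl : L₀ ^ β₄ ≤ LN ^ β₄ := Real.rpow_le_rpow hL₀pos.le hLNl hβ₄
  have hLNru : LN ^ β₄ ≤ 3 ^ β₄ * L₀ ^ β₄ := by
    calc LN ^ β₄ ≤ (3 * L₀) ^ β₄ := Real.rpow_le_rpow hLN0 hLNu hβ₄
      _ = 3 ^ β₄ * L₀ ^ β₄ := Real.mul_rpow (by norm_num) hL₀pos.le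
  have hC₂0 : (0:ℝ) < C₂ := by linarith
  constructor
  · -- lower bound
    have step1 : C₂⁻¹ * (5:ℝ) ^ ea * (m ^ β₁ * M ^ β₂ * Lm ^ β₃ * L₀ ^ β₄)
        ≤ C₂⁻¹ * (m ^ β₁ * M ^ β₂ * Lm ^ β₃ * LN ^ β₄ * N ^ ea) := by
      have h1 : (5:ℝ) ^ ea * (m ^ β₁ * M ^ β₂ * Lm ^ β₃ * L₀ ^ β₄)
          ≤ m ^ β₁ * M ^ β₂ * Lm ^ β₃ * LN ^ β₄ * N ^ ea := by
        have := mul_le_mul (mul_le_mul_of_nonneg_left hLNrl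
          (by positivity : (0:ℝ) ≤ m ^ β₁ * M ^ β₂ * Lm ^ β₃)) hNea_l
          (by positivity) (by positivity)
        calc (5:ℝ) ^ ea * (m ^ β₁ * M ^ β₂ * Lm ^ β₃ * L₀ ^ β₄)
            = m ^ β₁ * M ^ β₂ * Lm ^ β₃ * L₀ ^ β₄ * (5:ℝ) ^ ea := by ring
          _ ≤ m ^ β₁ * M ^ β₂ * Lm ^ β₃ * LN ^ β₄ * N ^ ea := by
              exact mul_le_mul (mul_le_mul_of_nonneg_left hLNrl
                (by positivity)) hNea_l (by positivity) (by positivity)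
      calc C₂⁻¹ * (5:ℝ) ^ ea * (m ^ β₁ * M ^ β₂ * Lm ^ β₃ * L₀ ^ β₄)
          = C₂⁻¹ * ((5:ℝ) ^ ea * (m ^ β₁ * M ^ β₂ * Lm ^ β₃ * L₀ ^ β₄)) := by ring
        _ ≤ C₂⁻¹ * (m ^ β₁ * M ^ β₂ * Lm ^ β₃ * LN ^ β₄ * N ^ ea) := by
            apply mul_le_mul_of_nonneg_left h1 (by positivity)
    have step2 : C₂⁻¹ * (m ^ β₁ * M ^ β₂ * Lm ^ β₃ * LN ^ β₄ * N ^ ea)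
        ≤ N ^ (-(d:ℝ) - α) * B z y := by
      rw [← key]
      calc C₂⁻¹ * (N ^ (-(d:ℝ) - α) * Btilde β₁ β₂ β₃ β₄ z y)
          = N ^ (-(d:ℝ) - α) * (C₂⁻¹ * Btilde β₁ β₂ β₃ β₄ z y) := by ring
        _ ≤ N ^ (-(d:ℝ) - α) * B z y := by
            apply mul_le_mul_of_nonneg_left (hBl z y hz2pos hy2) (by positivity)
    calc C₂⁻¹ * (5:ℝ) ^ ea * (m ^ β₁ * M ^ β₂ * Lm ^ β₃ * L₀ ^ β₄)
        ≤ C₂⁻¹ * (m ^ β₁ * M ^ β₂ * Lm ^ β₃ * LN ^ β₄ * N ^ ea) := step1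
      _ ≤ N ^ (-(d:ℝ) - α) * B z y := step2
  · -- upper bound
    have step2 : N ^ (-(d:ℝ) - α) * B z y
        ≤ C₂ * (m ^ β₁ * M ^ β₂ * Lm ^ β₃ * LN ^ β₄ * N ^ ea) := by
      rw [← key]
      calc N ^ (-(d:ℝ) - α) * B z y
          ≤ N ^ (-(d:ℝ) - α) * (C₂ * Btilde β₁ β₂ β₃ β₄ z y) := by
            apply mul_le_mul_of_nonneg_left (hBu z y hz2pos hy2) (by positivity)
        _ = C₂ * (N ^ (-(d:ℝ) - α) * Btilde β₁ β₂ β₃ β₄ z y) := by ring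
    have step1 : C₂ * (m ^ β₁ * M ^ β₂ * Lm ^ β₃ * LN ^ β₄ * N ^ ea)
        ≤ C₂ * 3 ^ β₄ * (3:ℝ) ^ ea * (m ^ β₁ * M ^ β₂ * Lm ^ β₃ * L₀ ^ β₄) := by
      have h1 : m ^ β₁ * M ^ β₂ * Lm ^ β₃ * LN ^ β₄ * N ^ ea
          ≤ m ^ β₁ * M ^ β₂ * Lm ^ β₃ * (3 ^ β₄ * L₀ ^ β₄) * (3:ℝ) ^ ea := by
        exact mul_le_mul (mul_le_mul_of_nonneg_left hLNru (by positivity))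
          hNea_u (by positivity) (by positivity)
      calc C₂ * (m ^ β₁ * M ^ β₂ * Lm ^ β₃ * LN ^ β₄ * N ^ ea)
          ≤ C₂ * (m ^ β₁ * M ^ β₂ * Lm ^ β₃ * (3 ^ β₄ * L₀ ^ β₄) * (3:ℝ) ^ ea) := by
            apply mul_le_mul_of_nonneg_left h1 hC₂0.le
        _ = C₂ * 3 ^ β₄ * (3:ℝ) ^ ea * (m ^ β₁ * M ^ β₂ * Lm ^ β₃ * L₀ ^ β₄) := by
            ring
    exact step2.trans step1

end
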